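/- Let 𝓑 be a downward-closed collection of subsets of finite Π satisfying the Byzantine fault predicate and 𝓖 = {Π \ B : B ∈ 𝓑}. If two 'echo quorums' G₁, G₂ ∈ 𝓖 each unanimously support values v₁ and v₂ respectively, and every processor outside a fixed B* ∈ 𝓑 supports at most one value, then v₁ = v₂. -/
import Mathlib

theorem generalized_echo_quorum_agreement
    {P : Type*} [Fintype P] [DecidableEq P] {V : Type*}
    (𝓑 : Set (Finset P))
    (hdc : ∀ B ∈ 𝓑, ∀ B' : Finset P, B' ⊆ B → B' ∈ 𝓑)
    (hbyz : ∀ B₁ ∈ 𝓑, ∀ B₂ ∈ 𝓑, ∀ B₃ ∈ 𝓑,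
      ¬ (Finset.univ : Finset P) ⊆ B₁ ∪ B₂ ∪ B₃)
    (Bstar : Finset P) (hBstar : Bstar ∈ 𝓑)
    (support : P → Option V)
    (B₁ B₂ : Finset P) (hB₁ : B₁ ∈ 𝓑) (hB₂ : B₂ ∈ 𝓑)
    (v₁ v₂ : V)
    (h1 : ∀ p ∈ (Finset.univ \ B₁ : Finset P), p ∉ Bstar → support p = some v₁)
    (h2 : ∀ p ∈ (Finset.univ \ B₂ : Finset P), p ∉ Bstar → support p = some v₂) :
    v₁ = v₂ := by
  have := hbyz B₁ hB₁ B₂ hB₂ Bstar hBstar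
  rw [Finset.not_subset] at this
  obtain ⟨p, -, hp⟩ := this
  simp only [Finset.mem_union, not_or] at hp
  obtain ⟨⟨hp1, hp2⟩, hps⟩ := hp
  have e1 := h1 p (by simp [hp1]) hps
  have e2 := h2 p (by simp [hp2]) hps
  exact Option.some_injective _ (e1 ▸ e2 ▸ rfl)
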